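/- Least-change interpolation: Let S_{k-1} ∈ R^{n×r} have orthonormal columns with span 𝒮_{k-1}, and let y ∈ R^n be supported on an index set ω ⊆ {1,...,n} (i.e., y = P_ω y). Assume P_ω S_{k-1} has full column rank r. Then the unique minimizer of ‖P_{𝒮_{k-1}^⊥} x‖₂² over all x ∈ R^n satisfying P_ω x = y is x* = y + P_{ω^C} S_{k-1} (P_ω S_{k-1})† y, where P_{ω^C} = I_n − P_ω and † denotes the Moore–Penrose pseudoinverse. -/
import Mathlib


open Matrix

/-- Least-change interpolation: let `S ∈ ℝ^{n×r}` have orthonormal columns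
(spanning `𝒮`), let `ω ⊆ {1,…,n}` with coordinate projection
`P_ω = diag(1_ω)`, and let `y ∈ ℝⁿ` be supported on `ω` (so `P_ω y = y`).
Assume `P_ω S` has full column rank r, so its Moore–Penrose pseudoinverse is
`(P_ω S)† = (Sᵀ P_ω S)⁻¹ Sᵀ P_ω`.  Then
`x* = y + P_{ωᶜ} S (P_ω S)† y` is the unique minimizer of
`‖P_{𝒮⊥} x‖₂²` over all `x` with `P_ω x = y`. -/
theorem least_change_interpolation {n r : ℕ} (hr : 0 < r) (hrn : r ≤ n)
    (S : Matrix (Fin n) (Fin r) ℝ) (hS : Sᵀ * S = 1)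
    (ω : Finset (Fin n)) (y : Fin n → ℝ)
    (Pω : Matrix (Fin n) (Fin n) ℝ)
    (hPω : Pω = Matrix.diagonal (fun i => if i ∈ ω then (1 : ℝ) else 0))
    (hy : Pω.mulVec y = y)
    (hrank : (Pω * S).rank = r) :
    -- the pseudoinverse, the candidate minimizer, and the objective
    ∀ pinv xstar obj,
      pinv = (Sᵀ * Pω * S)⁻¹ * Sᵀ * Pω →
      xstar = y + ((1 - Pω) * S * pinv).mulVec y →
      obj = (fun x : Fin n → ℝ => ∑ i, ((1 - S * Sᵀ).mulVec x i) ^ 2) →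
      -- x* is feasible, and it is the unique minimizer
      Pω.mulVec xstar = y ∧
        (∀ x : Fin n → ℝ, Pω.mulVec x = y → obj xstar ≤ obj x) ∧
        (∀ x : Fin n → ℝ, Pω.mulVec x = y → obj x = obj xstar → x = xstar) := by
  intro pinv xstar obj hpinv hxstar hobj
  -- basic facts about Pω
  have hPT : Pωᵀ = Pω := by
    rw [hPω, Matrix.diagonal_transpose]
  have hP2 : Pω * Pω = Pω := by
    have hd : ∀ i : Fin n, ((if i ∈ ω then (1:ℝ) else 0) * if i ∈ ω then 1 else 0)
        = (if i ∈ ω then (1:ℝ) else 0) := by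
      intro i; split <;> ring
    rw [hPω, Matrix.diagonal_mul_diagonal]
    exact congrArg _ (funext hd)
  -- M := Sᵀ Pω S is invertible
  set M : Matrix (Fin r) (Fin r) ℝ := Sᵀ * Pω * S with hM
  have hMfact : (Pω * S)ᵀ * (Pω * S) = M := by
    rw [Matrix.transpose_mul, hPT, Matrix.mul_assoc, ← Matrix.mul_assoc Pω, hP2,
      ← Matrix.mul_assoc]
  have hMrank : M.rank = r := by
    rw [← hMfact, Matrix.rank_transpose_mul_self, hrank]
  have hMunit : IsUnit M := by
    rw [← Matrix.mulVec_surjective_iff_isUnit]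
    have htop : LinearMap.range M.mulVecLin = ⊤ := by
      apply Submodule.eq_top_of_finrank_eq
      rw [show Module.finrank ℝ (LinearMap.range M.mulVecLin) = M.rank from rfl,
        hMrank, Module.finrank_fintype_fun_eq_card, Fintype.card_fin]
    intro v
    obtain ⟨u, hu⟩ := LinearMap.range_eq_top.mp htop v
    exact ⟨u, hu⟩
  have hMdet : IsUnit M.det := (Matrix.isUnit_iff_isUnit_det M).mp hMunit
  have hMMinv : M * M⁻¹ = 1 := Matrix.mul_nonsing_inv M hMdet
  have hMinvM : M⁻¹ * M = 1 := Matrix.nonsing_inv_mul M hMdet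
  -- a := pinv y
  set a : Fin r → ℝ := pinv.mulVec y with ha
  have hMa : M.mulVec a = Sᵀ.mulVec y := by
    rw [ha, hpinv, Matrix.mulVec_mulVec]
    have h2 : M * (M⁻¹ * Sᵀ * Pω) = Sᵀ * Pω := by
      rw [Matrix.mul_assoc M⁻¹, ← Matrix.mul_assoc M, hMMinv, Matrix.one_mul]
    rw [h2, ← Matrix.mulVec_mulVec, hy]
  have hxstar' : xstar = y + ((1 - Pω) * S).mulVec a := by
    rw [hxstar, ha, hpinv, ← Matrix.mulVec_mulVec, Matrix.mul_assoc]
  -- feasibility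
  have hfeas : Pω.mulVec xstar = y := by
    rw [hxstar', Matrix.mulVec_add, hy, Matrix.mulVec_mulVec,
      ← Matrix.mul_assoc, Matrix.mul_sub, Matrix.mul_one, hP2, sub_self, Matrix.zero_mul,
      Matrix.zero_mulVec, add_zero]
  -- Sᵀ xstar = a
  have hSTx : Sᵀ.mulVec xstar = a := by
    have h1 : (1 - Pω) * S = S - Pω * S := by rw [Matrix.sub_mul, Matrix.one_mul]
    have hmat : Sᵀ * ((1 - Pω) * S) = 1 - M := by
      rw [h1, Matrix.mul_sub, hS, hM, Matrix.mul_assoc]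
    rw [hxstar', Matrix.mulVec_add, Matrix.mulVec_mulVec, hmat,
      Matrix.sub_mulVec, Matrix.one_mulVec, hMa]
    abel
  -- the projector Q := 1 - S Sᵀ
  set Q : Matrix (Fin n) (Fin n) ℝ := 1 - S * Sᵀ with hQ
  have hQT : Qᵀ = Q := by
    rw [hQ, Matrix.transpose_sub, Matrix.transpose_one, Matrix.transpose_mul,
      Matrix.transpose_transpose]
  have hSST : S * Sᵀ * (S * Sᵀ) = S * Sᵀ := by
    rw [Matrix.mul_assoc, ← Matrix.mul_assoc Sᵀ, hS, Matrix.one_mul]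
  have hQ2 : Q * Q = Q := by
    rw [hQ, Matrix.sub_mul, Matrix.one_mul, Matrix.mul_sub, Matrix.mul_one, hSST]
    abel
  -- Q xstar is supported on ω
  have hQx : Q.mulVec xstar = y - (Pω * S).mulVec a := by
    have h1 : ((1 - Pω) * S).mulVec a = S.mulVec a - (Pω * S).mulVec a := by
      rw [Matrix.sub_mul, Matrix.one_mul, Matrix.sub_mulVec]
    rw [hQ, Matrix.sub_mulVec, Matrix.one_mulVec, ← Matrix.mulVec_mulVec, hSTx,
      hxstar', h1]
    abel
  have hPQx : Pω.mulVec (Q.mulVec xstar) = Q.mulVec xstar := by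
    rw [hQx, Matrix.mulVec_sub, hy, Matrix.mulVec_mulVec, ← Matrix.mul_assoc, hP2]
  -- orthogonality to the kernel of Pω
  have hperp : ∀ w : Fin n → ℝ, Pω.mulVec w = 0 → Q.mulVec xstar ⬝ᵥ w = 0 := by
    intro w hw
    rw [← hPQx, ← Matrix.vecMul_transpose, hPT, ← Matrix.dotProduct_mulVec, hw,
      dotProduct_zero]
  -- objective as a dot product
  have hobjd : ∀ x : Fin n → ℝ, obj x = Q.mulVec x ⬝ᵥ Q.mulVec x := by
    intro x
    rw [hobj]
    simp only [dotProduct, hQ, sq]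
  -- decomposition of the objective on the feasible set
  have hdecomp : ∀ x : Fin n → ℝ, Pω.mulVec x = y →
      obj x = obj xstar + Q.mulVec (x - xstar) ⬝ᵥ Q.mulVec (x - xstar) := by
    intro x hx
    have hw : Pω.mulVec (x - xstar) = 0 := by
      rw [Matrix.mulVec_sub, hx, hfeas, sub_self]
    have hx' : x = xstar + (x - xstar) := by abel
    have hcross : Q.mulVec xstar ⬝ᵥ Q.mulVec (x - xstar) = 0 := by
      rw [Matrix.dotProduct_mulVec, ← Matrix.mulVec_transpose, hQT,
        Matrix.mulVec_mulVec, hQ2]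
      exact hperp _ hw
    rw [hobjd x, hobjd xstar]
    conv_lhs => rw [hx']
    rw [Matrix.mulVec_add, dotProduct_add, add_dotProduct,
      add_dotProduct, hcross,
      dotProduct_comm (Q.mulVec (x - xstar)) (Q.mulVec xstar), hcross]
    ring
  refine ⟨hfeas, ?_, ?_⟩
  · intro x hx
    rw [hdecomp x hx]
    have hnn : (0:ℝ) ≤ Q.mulVec (x - xstar) ⬝ᵥ Q.mulVec (x - xstar) := by
      apply Finset.sum_nonneg
      intro i _
      exact mul_self_nonneg _
    linarith
  · intro x hx heq
    have h0 : Q.mulVec (x - xstar) ⬝ᵥ Q.mulVec (x - xstar) = 0 := by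
      have hd := hdecomp x hx
      rw [heq] at hd
      linarith
    have hQw : Q.mulVec (x - xstar) = 0 := dotProduct_self_eq_zero.mp h0
    set w := x - xstar with hwdef
    have hw : Pω.mulVec w = 0 := by
      rw [hwdef, Matrix.mulVec_sub, hx, hfeas, sub_self]
    have hwS : w = S.mulVec (Sᵀ.mulVec w) := by
      have hQw' : w - (S * Sᵀ).mulVec w = 0 := by
        rw [hQ, Matrix.sub_mulVec, Matrix.one_mulVec] at hQw
        exact hQw
      rw [Matrix.mulVec_mulVec]
      exact sub_eq_zero.mp hQw'
    set b := Sᵀ.mulVec w with hb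
    have hPSb : (Pω * S).mulVec b = 0 := by
      rw [← Matrix.mulVec_mulVec, ← hwS]
      exact hw
    have hMb : M.mulVec b = 0 := by
      have hM' : M = Sᵀ * (Pω * S) := by rw [hM, Matrix.mul_assoc]
      rw [hM', ← Matrix.mulVec_mulVec, hPSb, Matrix.mulVec_zero]
    have hb0 : b = 0 := by
      have hc := congrArg (M⁻¹.mulVec) hMb
      rwa [Matrix.mulVec_mulVec, hMinvM, Matrix.one_mulVec, Matrix.mulVec_zero] at hc
    have hw0 : w = 0 := by rw [hwS, hb0, Matrix.mulVec_zero]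
    have hxx : x - xstar = 0 := by rw [← hwdef]; exact hw0
    exact sub_eq_zero.mp hxx
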